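/- If treatment assignment is unconfounded given covariates X (i.e., Y(t) ⟂ T | X for all t), and b(X) is a balancing score (i.e., X ⟂ T | b(X)), then treatment assignment is unconfounded given b(X): Y(t) ⟂ T | b(X) for all t. -/
import Mathlib


open scoped Classical

noncomputable def Pr {Ω : Type*} [Fintype Ω] (μ : Ω → ℝ) (A : Ω → Prop) : ℝ :=
  ∑ ω, if A ω then μ ω else 0

noncomputable def CondPr {Ω : Type*} [Fintype Ω] (μ : Ω → ℝ) (A B : Ω → Prop) : ℝ :=
  Pr μ (fun ω => A ω ∧ B ω) / Pr μ B

lemma Pr_nonneg' {Ω : Type*} [Fintype Ω] {μ : Ω → ℝ} (hμ : ∀ ω, 0 ≤ μ ω) (A : Ω → Prop) :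
    0 ≤ Pr μ A := by
  apply Finset.sum_nonneg
  intro ω _
  split <;> simp [hμ ω]

lemma Pr_congr' {Ω : Type*} [Fintype Ω] (μ : Ω → ℝ) {A B : Ω → Prop}
    (h : ∀ ω, A ω ↔ B ω) : Pr μ A = Pr μ B := by
  unfold Pr
  apply Finset.sum_congr rfl
  intro ω _
  simp [h ω]

lemma Pr_mono' {Ω : Type*} [Fintype Ω] {μ : Ω → ℝ} (hμ : ∀ ω, 0 ≤ μ ω) {A B : Ω → Prop}
    (h : ∀ ω, A ω → B ω) : Pr μ A ≤ Pr μ B := by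
  apply Finset.sum_le_sum
  intro ω _
  by_cases hA : A ω
  · simp [hA, h ω hA]
  · simp only [hA, if_false]
    split <;> simp [hμ ω]

lemma Pr_zero_of_subset {Ω : Type*} [Fintype Ω] {μ : Ω → ℝ} (hμ : ∀ ω, 0 ≤ μ ω)
    {A B : Ω → Prop} (h0 : Pr μ A = 0) (h : ∀ ω, B ω → A ω) : Pr μ B = 0 :=
  le_antisymm (h0 ▸ Pr_mono' hμ h) (Pr_nonneg' hμ B)

lemma Pr_partition {Ω 𝒳 : Type*} [Fintype Ω] [Fintype 𝒳] (μ : Ω → ℝ) (A : Ω → Prop)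
    (f : Ω → 𝒳) : Pr μ A = ∑ x, Pr μ (fun ω => A ω ∧ f ω = x) := by
  unfold Pr
  rw [Finset.sum_comm]
  apply Finset.sum_congr rfl
  intro ω _
  by_cases h : A ω <;> simp [h]

theorem stmt_2 {Ω 𝒳 ℬ : Type*} [Fintype Ω] [Fintype 𝒳] [Fintype ℬ] {k : ℕ}
    (μ : Ω → ℝ) (hμ : ∀ ω, 0 ≤ μ ω) (hμ1 : ∑ ω, μ ω = 1)
    (X : Ω → 𝒳) (T : Ω → Fin k) (Y : Fin k → Ω → ℝ) (b : 𝒳 → ℬ)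
    -- Unconfoundedness given X: Y(t) ⟂ T | X for all t.
    (hU : ∀ (t' t : Fin k) (y : ℝ) (x : 𝒳), 0 < Pr μ (fun ω => X ω = x) →
      CondPr μ (fun ω => Y t' ω = y ∧ T ω = t) (fun ω => X ω = x)
        = CondPr μ (fun ω => Y t' ω = y) (fun ω => X ω = x)
          * CondPr μ (fun ω => T ω = t) (fun ω => X ω = x))
    -- b(X) is a balancing score: X ⟂ T | b(X).
    (hB : ∀ (x : 𝒳) (t : Fin k) (c : ℬ), 0 < Pr μ (fun ω => b (X ω) = c) →
      CondPr μ (fun ω => X ω = x ∧ T ω = t) (fun ω => b (X ω) = c)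
        = CondPr μ (fun ω => X ω = x) (fun ω => b (X ω) = c)
          * CondPr μ (fun ω => T ω = t) (fun ω => b (X ω) = c)) :
    -- Unconfoundedness given b(X): Y(t) ⟂ T | b(X) for all t.
    ∀ (t' t : Fin k) (y : ℝ) (c : ℬ), 0 < Pr μ (fun ω => b (X ω) = c) →
      CondPr μ (fun ω => Y t' ω = y ∧ T ω = t) (fun ω => b (X ω) = c)
        = CondPr μ (fun ω => Y t' ω = y) (fun ω => b (X ω) = c)
          * CondPr μ (fun ω => T ω = t) (fun ω => b (X ω) = c) := by
  intro t' t y c hc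
  set B := Pr μ (fun ω => b (X ω) = c) with hBdef
  have hBne : B ≠ 0 := ne_of_gt hc
  set PTc := Pr μ (fun ω => T ω = t ∧ b (X ω) = c) with hPTc
  -- key pointwise (over x) equality
  have hkey : ∀ x : 𝒳, b x = c →
      Pr μ (fun ω => (Y t' ω = y ∧ T ω = t) ∧ X ω = x) * B
        = Pr μ (fun ω => Y t' ω = y ∧ X ω = x) * PTc := by
    intro x hbx
    set Px := Pr μ (fun ω => X ω = x) with hPx
    rcases lt_or_eq_of_le (Pr_nonneg' hμ (fun ω => X ω = x)) with hPx0 | hPx0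
    · -- Px > 0
      have hU' := hU t' t y x hPx0
      unfold CondPr at hU'
      rw [div_mul_div_comm, div_eq_div_iff (ne_of_gt hPx0) (by positivity)] at hU'
      -- hU' : PrYT_x * (Px * Px) = PrY_x * PrT_x * Px
      have hB' := hB x t c hc
      unfold CondPr at hB'
      rw [div_mul_div_comm, div_eq_div_iff hBne (by positivity)] at hB'
      have e1 : Pr μ (fun ω => (X ω = x ∧ T ω = t) ∧ b (X ω) = c)
          = Pr μ (fun ω => T ω = t ∧ X ω = x) := by
        apply Pr_congr'
        intro ω
        constructor
        · rintro ⟨⟨h1, h2⟩, _⟩; exact ⟨h2, h1⟩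
        · rintro ⟨h2, h1⟩; exact ⟨⟨h1, h2⟩, h1 ▸ hbx⟩
      have e2 : Pr μ (fun ω => X ω = x ∧ b (X ω) = c) = Px := by
        apply Pr_congr'
        intro ω
        constructor
        · rintro ⟨h1, _⟩; exact h1
        · intro h1; exact ⟨h1, h1 ▸ hbx⟩
      rw [e1, e2] at hB'
      -- hB' : PrT_x * (B*B) = Px * PTc * B
      set PYT := Pr μ (fun ω => (Y t' ω = y ∧ T ω = t) ∧ X ω = x)
      set PY := Pr μ (fun ω => Y t' ω = y ∧ X ω = x)
      set PT := Pr μ (fun ω => T ω = t ∧ X ω = x)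
      beta_reduce at hU' hB'
      rw [← hPx] at hU'
      rw [← hBdef, ← hPTc] at hB'
      have goal2 : PYT * B * (Px * Px * B) = PY * PTc * (Px * Px * B) := by
        linear_combination B ^ 2 * hU' + PY * Px * hB'
      have hne : Px * Px * B ≠ 0 := by positivity
      exact mul_right_cancel₀ hne goal2
    · -- Px = 0
      have h1 : Pr μ (fun ω => (Y t' ω = y ∧ T ω = t) ∧ X ω = x) = 0 :=
        Pr_zero_of_subset hμ hPx0.symm (fun ω h => h.2)
      have h2 : Pr μ (fun ω => Y t' ω = y ∧ X ω = x) = 0 :=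
        Pr_zero_of_subset hμ hPx0.symm (fun ω h => h.2)
      rw [h1, h2]; ring
  -- partition lemma specialized
  have hpart : ∀ A : Ω → Prop,
      Pr μ (fun ω => A ω ∧ b (X ω) = c)
        = ∑ x, if b x = c then Pr μ (fun ω => A ω ∧ X ω = x) else 0 := by
    intro A
    rw [Pr_partition μ (fun ω => A ω ∧ b (X ω) = c) X]
    apply Finset.sum_congr rfl
    intro x _
    by_cases hbx : b x = c
    · simp only [hbx, if_true]
      apply Pr_congr'
      intro ω
      constructor
      · rintro ⟨⟨h1, _⟩, h3⟩; exact ⟨h1, h3⟩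
      · rintro ⟨h1, h3⟩; exact ⟨⟨h1, h3 ▸ hbx⟩, h3⟩
    · simp only [hbx, if_false]
      apply Pr_zero_of_subset hμ (B := fun ω => (A ω ∧ b (X ω) = c) ∧ X ω = x)
        (A := fun _ => False)
      · simp [Pr]
      · rintro ω ⟨⟨_, h2⟩, h3⟩; exact hbx (h3 ▸ h2)
  -- main computation
  have key : Pr μ (fun ω => (Y t' ω = y ∧ T ω = t) ∧ b (X ω) = c) * B
      = Pr μ (fun ω => Y t' ω = y ∧ b (X ω) = c) * PTc := by
    rw [hpart (fun ω => Y t' ω = y ∧ T ω = t), hpart (fun ω => Y t' ω = y),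
      Finset.sum_mul, Finset.sum_mul]
    apply Finset.sum_congr rfl
    intro x _
    by_cases hbx : b x = c
    · simp only [hbx, if_true]
      exact hkey x hbx
    · simp [hbx]
  unfold CondPr
  rw [div_mul_div_comm, div_eq_div_iff hBne (by positivity)]
  linear_combination B * key
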